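/- Let α > 1 be a real number. For every multigraph G there exists a simple bipartite subgraph H of G such that for every vertex v ∈ V(G), the α-exponential degree satisfies d^ex_{G−H}(α, v) ≤ (1/2)(1 + α⁻¹)·d^ex_G(α, v). In particular, Δ^ex(α, G−H) ≤ (1/2)(1 + α⁻¹)·Δ^ex(α, G). -/

import Mathlib

/-- The `α`-exponential degree of a vertex `v` in the multigraph with multiplicity
function `G`: `d^ex_G(α, v) = ∑_{u ∈ N(v)} α^{μ(uv)}` (only actual neighbours, i.e.
vertices `u` with `G v u ≥ 1`, contribute). -/
noncomputable def expDeg {V : Type*} [Fintype V] (α : ℝ) (G : V → V → ℕ) (v : V) : ℝ :=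
  ∑ u ∈ Finset.univ.filter (fun u => 0 < G v u), α ^ (G v u)

/- STATEMENT 9 (Erdős-type max-cut lemma for exponential degrees). -/
theorem erdos_multigraph_bipartite_subgraph {V : Type*} [Fintype V] [Nonempty V]
    (α : ℝ) (hα : 1 < α) (G : V → V → ℕ)
    (hGsymm : ∀ x y, G x y = G y x) (hGloop : ∀ v, G v v = 0) :
    ∃ H : V → V → ℕ,
      (∀ x y, H x y = H y x) ∧
      (∀ x y, H x y ≤ 1) ∧
      (∀ x y, H x y ≤ G x y) ∧
      (∃ S : Finset V, ∀ x y, H x y ≠ 0 → ((x ∈ S ∧ y ∉ S) ∨ (x ∉ S ∧ y ∈ S))) ∧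
      (∀ v, expDeg α (fun x y => G x y - H x y) v ≤ (1 / 2) * (1 + α⁻¹) * expDeg α G v) ∧
      Finset.univ.sup' Finset.univ_nonempty (expDeg α (fun x y => G x y - H x y)) ≤
        (1 / 2) * (1 + α⁻¹) * Finset.univ.sup' Finset.univ_nonempty (expDeg α G) := by
  classical
  have hα0 : (0:ℝ) < α := lt_trans one_pos hα
  have hαne : α ≠ 0 := ne_of_gt hα0
  have hinv0 : (0:ℝ) < α⁻¹ := inv_pos.2 hα0
  have hinv1 : α⁻¹ ≤ 1 := by
    rw [inv_le_one_iff₀]; right; exact le_of_lt hα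
  set w : V → V → ℝ := fun x y => if 0 < G x y then α ^ G x y else 0 with hw
  have hwsymm : ∀ x y, w x y = w y x := by
    intro x y; simp only [hw, hGsymm x y]
  have hwnn : ∀ x y, 0 ≤ w x y := by
    intro x y; simp only [hw]; split <;> positivity
  have hwloop : ∀ v, w v v = 0 := by
    intro v; simp [hw, hGloop v]
  obtain ⟨S, -, hS⟩ := Finset.exists_max_image (Finset.univ : Finset (Finset V))
      (fun T => ∑ x ∈ T, ∑ y ∈ Tᶜ, w x y) ⟨∅, Finset.mem_univ _⟩
  -- the key local max-cut property
  have key : ∀ v : V, ∑ u ∈ Finset.univ.filter (fun u => ¬ (v ∈ S ↔ u ∉ S)), w v u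
      ≤ ∑ u ∈ Finset.univ.filter (fun u => (v ∈ S ↔ u ∉ S)), w v u := by
    intro v
    by_cases hv : v ∈ S
    · have hfil1 : Finset.univ.filter (fun u => ¬ (v ∈ S ↔ u ∉ S)) = S := by
        ext u; simp [hv]
      have hfil2 : Finset.univ.filter (fun u => (v ∈ S ↔ u ∉ S)) = Sᶜ := by
        ext u; simp [hv]
      rw [hfil1, hfil2]
      have h1 := hS (S.erase v) (Finset.mem_univ _)
      have hcompl : (S.erase v)ᶜ = insert v Sᶜ := by
        ext u
        simp only [Finset.mem_compl, Finset.mem_erase, Finset.mem_insert]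
        tauto
      have hvS : v ∉ Sᶜ := by simp [hv]
      have hfS : ∑ x ∈ S, ∑ y ∈ Sᶜ, w x y
          = (∑ y ∈ Sᶜ, w v y) + ∑ x ∈ S.erase v, ∑ y ∈ Sᶜ, w x y :=
        (Finset.add_sum_erase _ _ hv).symm
      have hfS' : ∑ x ∈ S.erase v, ∑ y ∈ (S.erase v)ᶜ, w x y
          = (∑ x ∈ S.erase v, w x v) + ∑ x ∈ S.erase v, ∑ y ∈ Sᶜ, w x y := by
        rw [hcompl, ← Finset.sum_add_distrib]
        refine Finset.sum_congr rfl fun x _ => ?_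
        rw [Finset.sum_insert hvS]
      have h2 : ∑ x ∈ S.erase v, w x v ≤ ∑ y ∈ Sᶜ, w v y := by
        rw [hfS] at h1; rw [hfS'] at h1; linarith
      calc ∑ u ∈ S, w v u = w v v + ∑ u ∈ S.erase v, w v u :=
            (Finset.add_sum_erase _ _ hv).symm
        _ = ∑ u ∈ S.erase v, w u v := by
            rw [hwloop, zero_add]
            exact Finset.sum_congr rfl fun u _ => hwsymm v u
        _ ≤ ∑ y ∈ Sᶜ, w v y := h2
    · have hfil1 : Finset.univ.filter (fun u => ¬ (v ∈ S ↔ u ∉ S)) = Sᶜ := by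
        ext u; simp [hv]
      have hfil2 : Finset.univ.filter (fun u => (v ∈ S ↔ u ∉ S)) = S := by
        ext u; simp [hv]
      rw [hfil1, hfil2]
      have h1 := hS (insert v S) (Finset.mem_univ _)
      have hvS : v ∈ Sᶜ := by simp [hv]
      have hcompl : (insert v S)ᶜ = Sᶜ.erase v := by
        ext u
        simp only [Finset.mem_compl, Finset.mem_erase, Finset.mem_insert]
        tauto
      have hfT : ∑ x ∈ insert v S, ∑ y ∈ (insert v S)ᶜ, w x y
          = (∑ y ∈ Sᶜ.erase v, w v y)
            + ((∑ x ∈ S, ∑ y ∈ Sᶜ, w x y) - ∑ x ∈ S, w x v) := by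
        rw [hcompl, Finset.sum_insert hv, ← Finset.sum_sub_distrib]
        congr 1
        refine Finset.sum_congr rfl fun x _ => ?_
        rw [eq_sub_iff_add_eq, add_comm, ← Finset.add_sum_erase _ _ hvS]
      have h2 : ∑ y ∈ Sᶜ.erase v, w v y ≤ ∑ x ∈ S, w x v := by
        rw [hfT] at h1; linarith
      calc ∑ u ∈ Sᶜ, w v u = w v v + ∑ u ∈ Sᶜ.erase v, w v u :=
            (Finset.add_sum_erase _ _ hvS).symm
        _ = ∑ u ∈ Sᶜ.erase v, w v u := by rw [hwloop, zero_add]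
        _ ≤ ∑ x ∈ S, w x v := h2
        _ = ∑ x ∈ S, w v x := Finset.sum_congr rfl fun x _ => hwsymm x v
  -- define H
  set H : V → V → ℕ := fun x y => if (x ∈ S ↔ y ∉ S) ∧ 0 < G x y then 1 else 0 with hH
  have hHsymm : ∀ x y, H x y = H y x := by
    intro x y
    have hiff : ((x ∈ S ↔ y ∉ S) ∧ 0 < G x y) ↔ ((y ∈ S ↔ x ∉ S) ∧ 0 < G y x) := by
      rw [hGsymm x y]; tauto
    simp only [hH]
    exact if_congr hiff rfl rfl
  have hHle1 : ∀ x y, H x y ≤ 1 := by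
    intro x y; simp only [hH]; split <;> omega
  have hHleG : ∀ x y, H x y ≤ G x y := by
    intro x y; simp only [hH]; split <;> omega
  have hHbip : ∀ x y, H x y ≠ 0 → ((x ∈ S ∧ y ∉ S) ∨ (x ∉ S ∧ y ∈ S)) := by
    intro x y hxy
    simp only [hH] at hxy
    by_cases h : (x ∈ S ↔ y ∉ S) ∧ 0 < G x y
    · by_cases hx : x ∈ S
      · left; exact ⟨hx, h.1.mp hx⟩
      · right; exact ⟨hx, by by_contra hy; exact hx (h.1.mpr hy)⟩
    · simp [h] at hxy
  -- per-vertex bound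
  have hper : ∀ v, expDeg α (fun x y => G x y - H x y) v
      ≤ (1 / 2) * (1 + α⁻¹) * expDeg α G v := by
    intro v
    set b : V → ℝ := fun u => if (v ∈ S ↔ u ∉ S) then α⁻¹ * w v u else w v u with hb
    have hbnn : ∀ u, 0 ≤ b u := by
      intro u; simp only [hb]; split
      · exact mul_nonneg (le_of_lt hinv0) (hwnn v u)
      · exact hwnn v u
    have step1 : expDeg α (fun x y => G x y - H x y) v ≤ ∑ u ∈ Finset.univ, b u := by
      unfold expDeg
      refine le_trans (Finset.sum_le_sum (fun u hu => ?_))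
        (Finset.sum_le_sum_of_subset_of_nonneg (Finset.filter_subset _ _)
          (fun u _ _ => hbnn u))
      simp only [Finset.mem_filter] at hu
      have hGpos : 0 < G v u := lt_of_lt_of_le hu.2 (Nat.sub_le _ _)
      have hwvu : w v u = α ^ G v u := by simp [hw, hGpos]
      simp only [hb]
      by_cases hc : (v ∈ S ↔ u ∉ S)
      · have hH1 : H v u = 1 := by simp only [hH]; exact if_pos ⟨hc, hGpos⟩
        rw [if_pos hc, hwvu]
        rw [hH1] at hu ⊢
        have h2 : 2 ≤ G v u := by omega
        have hmul : α ^ (G v u - 1) * α = α ^ G v u := by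
          rw [← pow_succ]; congr 1; omega
        calc α ^ (G v u - 1) = α ^ G v u * α⁻¹ := by
              rw [← hmul]; field_simp
          _ ≤ α⁻¹ * α ^ G v u := le_of_eq (mul_comm _ _)
      · have hH0 : H v u = 0 := by
          simp only [hH]; exact if_neg (by tauto)
        rw [if_neg hc, hwvu]
        rw [hH0] at hu ⊢
        simp
    have hsplit : ∀ f : V → ℝ, ∑ u ∈ Finset.univ, f u
        = ∑ u ∈ Finset.univ.filter (fun u => (v ∈ S ↔ u ∉ S)), f u
          + ∑ u ∈ Finset.univ.filter (fun u => ¬ (v ∈ S ↔ u ∉ S)), f u := by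
      intro f; exact (Finset.sum_filter_add_sum_filter_not _ _ _).symm
    set C : ℝ := ∑ u ∈ Finset.univ.filter (fun u => (v ∈ S ↔ u ∉ S)), w v u with hC
    set D : ℝ := ∑ u ∈ Finset.univ.filter (fun u => ¬ (v ∈ S ↔ u ∉ S)), w v u with hD
    have hsb : ∑ u ∈ Finset.univ, b u = α⁻¹ * C + D := by
      rw [hsplit b, hC, hD, Finset.mul_sum]
      congr 1
      · exact Finset.sum_congr rfl fun u hu => by
          simp only [Finset.mem_filter] at hu; simp [hb, hu.2]
      · exact Finset.sum_congr rfl fun u hu => by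
          simp only [Finset.mem_filter] at hu; simp [hb, hu.2]
    have hED : expDeg α G v = C + D := by
      unfold expDeg
      have h0 : ∑ u ∈ Finset.univ.filter (fun u => 0 < G v u), α ^ G v u
          = ∑ u ∈ Finset.univ, w v u := by
        simp only [hw, Finset.sum_filter]
      rw [h0, hsplit (w v), hC, hD]
    have hDC : D ≤ C := key v
    have hD0 : 0 ≤ D := Finset.sum_nonneg fun u _ => hwnn v u
    have hC0 : 0 ≤ C := Finset.sum_nonneg fun u _ => hwnn v u
    rw [hED]
    refine le_trans step1 ?_
    rw [hsb]
    nlinarith [mul_nonneg (sub_nonneg.2 hinv1) (sub_nonneg.2 hDC)]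
  refine ⟨H, hHsymm, hHle1, hHleG, ⟨S, hHbip⟩, hper, ?_⟩
  apply Finset.sup'_le
  intro v _
  refine le_trans (hper v) ?_
  have hc : (0:ℝ) ≤ (1/2) * (1 + α⁻¹) := by positivity
  exact mul_le_mul_of_nonneg_left (Finset.le_sup' _ (Finset.mem_univ v)) hc
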